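/- arXiv:2512.06825 — 8 statements merged into one kernel-verified Lean document; each statement's English description precedes it below -/
import Mathlib

section
/- Let H be a symmetric positive definite matrix with H ⪰ c·I for some c > 0, and let φ_k(x) = ⟨g, x − x_k⟩ + ½⟨x − x_k, H(x − x_k)⟩ + h(x). Suppose x_{k+1} satisfies: there exists ξ ∈ ∂φ_k(x_{k+1}) with ‖ξ‖ ≤ (η/2)‖x_{k+1} − x_k‖. Define G̃(x_k) = x_k − prox_h(x_k − g). Then ‖G̃(x_k)‖ ≤ (1 + η/2 + ‖H‖)·‖x_k − x_{k+1}‖. -/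
open scoped RealInnerProductSpace

/-- Geometric lemma: if `⟪d - r, d - w⟫ ≤ 0` then `‖d‖ ≤ ‖r‖ + ‖w‖`. -/
lemma norm_le_of_inner_sub_nonpos {n : ℕ} (d r w : EuclideanSpace ℝ (Fin n))
    (hdr : ⟪d - r, d - w⟫ ≤ 0) : ‖d‖ ≤ ‖r‖ + ‖w‖ := by
  have hm : ‖d - (1/2 : ℝ) • (r + w)‖ ^ 2 ≤ ‖(1/2 : ℝ) • (r - w)‖ ^ 2 := by
    have e1 : ‖d - (1/2 : ℝ) • (r + w)‖ ^ 2 - ‖(1/2 : ℝ) • (r - w)‖ ^ 2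
        = ⟪d - r, d - w⟫ := by
      simp only [← real_inner_self_eq_norm_sq, inner_sub_left, inner_sub_right,
        inner_smul_left, inner_smul_right, inner_add_left, inner_add_right,
        starRingEnd_apply, star_trivial]
      rw [real_inner_comm w r, real_inner_comm w d, real_inner_comm r d]
      ring
    linarith
  have hm' : ‖d - (1/2 : ℝ) • (r + w)‖ ≤ ‖(1/2 : ℝ) • (r - w)‖ := by
    nlinarith [norm_nonneg (d - (1/2 : ℝ) • (r + w)), norm_nonneg ((1/2 : ℝ) • (r - w))]
  calc ‖d‖ ≤ ‖d - (1/2 : ℝ) • (r + w)‖ + ‖(1/2 : ℝ) • (r + w)‖ := by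
        simpa using norm_add_le (d - (1/2 : ℝ) • (r + w)) ((1/2 : ℝ) • (r + w))
    _ ≤ ‖(1/2 : ℝ) • (r - w)‖ + ‖(1/2 : ℝ) • (r + w)‖ := by linarith
    _ ≤ ‖r‖ + ‖w‖ := by
        rw [norm_smul, norm_smul]
        have h1 := norm_sub_le r w
        have h2 := norm_add_le r w
        simp only [norm_div, Real.norm_ofNat, norm_one]
        nlinarith [norm_nonneg r, norm_nonneg w]

set_option maxHeartbeats 1000000
/-- If `H` is a symmetric positive definite operator with `H ⪰ c·I`,
`φₖ(x) = ⟨g, x − xₖ⟩ + ½⟨x − xₖ, H(x − xₖ)⟩ + h(x)`, and `x_{k+1}` admits a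
subgradient `ξ ∈ ∂φₖ(x_{k+1})` with `‖ξ‖ ≤ (η/2)‖x_{k+1} − xₖ‖`, then
`‖G̃(xₖ)‖ ≤ (1 + η/2 + ‖H‖)‖xₖ − x_{k+1}‖` where `G̃(xₖ) = xₖ − prox_h(xₖ − g)`. -/
theorem stmt1 {n : ℕ}
    (h : EuclideanSpace ℝ (Fin n) → ℝ) (hconv : ConvexOn ℝ Set.univ h)
    (prox : EuclideanSpace ℝ (Fin n) → EuclideanSpace ℝ (Fin n))
    -- characterization of the proximal mapping of the convex function h
    (hprox : ∀ u p, p = prox u ↔ ∀ z, h p + ⟪u - p, z - p⟫ ≤ h z)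
    (g xk x1 ξ : EuclideanSpace ℝ (Fin n))
    (c η : ℝ) (hc : 0 < c) (hη0 : 0 ≤ η) (hη1 : η < 1)
    (H : EuclideanSpace ℝ (Fin n) →L[ℝ] EuclideanSpace ℝ (Fin n))
    (hsym : ∀ u v, ⟪H u, v⟫ = ⟪u, H v⟫)
    (hpd : ∀ v, c * ‖v‖ ^ 2 ≤ ⟪v, H v⟫)
    (φ : EuclideanSpace ℝ (Fin n) → ℝ)
    (hφ : ∀ z, φ z = ⟪g, z - xk⟫ + (1 / 2) * ⟪z - xk, H (z - xk)⟫ + h z)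
    -- ξ is a subgradient of φ at x1 with the inexactness bound
    (hξ : ∀ z, φ x1 + ⟪ξ, z - x1⟫ ≤ φ z)
    (hξn : ‖ξ‖ ≤ η / 2 * ‖x1 - xk‖) :
    ‖xk - prox (xk - g)‖ ≤ (1 + η / 2 + ‖H‖) * ‖xk - x1‖ := by
  set p := prox (xk - g) with hp
  have Hp : ∀ z, h p + ⟪(xk - g) - p, z - p⟫ ≤ h z := (hprox (xk - g) p).mp hp
  have hsub : ∀ z, h x1 + ⟪ξ - g - H (x1 - xk), z - x1⟫ ≤ h z := by
    intro z
    have h3 : (0:ℝ) ≤ ⟪z - x1, H (z - x1)⟫ :=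
      le_trans (by positivity) (hpd (z - x1))
    have elin : ⟪ξ - g - H (x1 - xk), z - x1⟫
        = ⟪ξ, z - x1⟫ - ⟪g, z - x1⟫ - ⟪x1 - xk, H (z - x1)⟫ := by
      rw [inner_sub_left, inner_sub_left, hsym]
    have key : ∀ t : ℝ, 0 < t → t ≤ 1 →
        ⟪ξ - g - H (x1 - xk), z - x1⟫
          ≤ (h z - h x1) + t * ⟪z - x1, H (z - x1)⟫ := by
      intro t ht0 ht1
      have hz := hξ (x1 + t • (z - x1))
      rw [hφ (x1 + t • (z - x1)), hφ x1] at hz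
      have ept : x1 + t • (z - x1) - xk = (x1 - xk) + t • (z - x1) := by abel
      have ept2 : x1 + t • (z - x1) - x1 = t • (z - x1) := by abel
      rw [ept, ept2] at hz
      have hcvx : h (x1 + t • (z - x1)) ≤ (1 - t) * h x1 + t * h z := by
        have e : x1 + t • (z - x1) = (1 - t) • x1 + t • z := by
          rw [smul_sub, sub_smul, one_smul]; abel
        rw [e]
        exact hconv.2 (Set.mem_univ x1) (Set.mem_univ z)
          (by linarith) (le_of_lt ht0) (by ring)
      have eg : ⟪g, (x1 - xk) + t • (z - x1)⟫ = ⟪g, x1 - xk⟫ + t * ⟪g, z - x1⟫ := by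
        rw [inner_add_right, real_inner_smul_right]
      have eξ : ⟪ξ, t • (z - x1)⟫ = t * ⟪ξ, z - x1⟫ := real_inner_smul_right _ _ _
      have hab : ⟪z - x1, H (x1 - xk)⟫ = ⟪x1 - xk, H (z - x1)⟫ :=
        (real_inner_comm _ _).trans (hsym _ _)
      have eQ : ⟪(x1 - xk) + t • (z - x1), H ((x1 - xk) + t • (z - x1))⟫
          = ⟪x1 - xk, H (x1 - xk)⟫ + 2 * t * ⟪x1 - xk, H (z - x1)⟫
            + t ^ 2 * ⟪z - x1, H (z - x1)⟫ := by
        rw [map_add, map_smul, inner_add_left, inner_add_right, inner_add_right,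
          real_inner_smul_left, real_inner_smul_left, real_inner_smul_right,
          real_inner_smul_right, hab]
        ring
      rw [eg, eξ, eQ] at hz
      rw [elin]
      have hdiv : t * (⟪ξ, z - x1⟫ - ⟪g, z - x1⟫ - ⟪x1 - xk, H (z - x1)⟫)
          ≤ t * ((h z - h x1) + t / 2 * ⟪z - x1, H (z - x1)⟫) := by
        nlinarith [hz, hcvx]
      have hX := (mul_le_mul_iff_right₀ ht0).mp hdiv
      nlinarith [h3, ht0.le, ht1]
    by_contra hcon
    push_neg at hcon
    set Q := ⟪z - x1, H (z - x1)⟫ with hQ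
    set ε := h x1 + ⟪ξ - g - H (x1 - xk), z - x1⟫ - h z with hε
    have hε0 : 0 < ε := by simp only [hε]; linarith
    have hQ1 : (0:ℝ) < Q + 1 := by linarith
    have ht0 : 0 < min 1 (ε / (Q + 1)) := lt_min one_pos (div_pos hε0 hQ1)
    have hk := key (min 1 (ε / (Q + 1))) ht0 (min_le_left _ _)
    have h4 : min 1 (ε / (Q + 1)) * Q ≤ ε / (Q + 1) * Q :=
      mul_le_mul_of_nonneg_right (min_le_right _ _) h3
    have h5 : ε / (Q + 1) * Q < ε := by
      rw [div_mul_eq_mul_div, div_lt_iff₀ hQ1]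
      nlinarith
    simp only [hε] at h5 hk h4
    linarith
  have hmono : ⟪(xk - p) - (ξ - H (x1 - xk)), x1 - p⟫ ≤ 0 := by
    have a1 := Hp x1
    have a2 := hsub p
    have e : ⟪(xk - p) - (ξ - H (x1 - xk)), x1 - p⟫
        = ⟪(xk - g) - p, x1 - p⟫ + ⟪ξ - g - H (x1 - xk), p - x1⟫ := by
      simp only [inner_sub_left, inner_sub_right]
      ring
    linarith
  have hkey : ⟪(xk - p) - (ξ - H (x1 - xk)), (xk - p) - (xk - x1)⟫ ≤ 0 := by
    rw [sub_sub_sub_cancel_left p x1 xk]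
    exact hmono
  have hb := norm_le_of_inner_sub_nonpos (xk - p) (ξ - H (x1 - xk)) (xk - x1) hkey
  have hrev : ‖x1 - xk‖ = ‖xk - x1‖ := norm_sub_rev _ _
  have htri := norm_sub_le ξ (H (x1 - xk))
  have hop := H.le_opNorm (x1 - xk)
  have hHnn : (0:ℝ) ≤ ‖H‖ := norm_nonneg _
  nlinarith [norm_nonneg (xk - x1)]
end

section
/- Under the setting of the OEF proximal Newton step: f has L_g-Lipschitz gradient, ‖g_k − ∇f(x_k)‖ ≤ δ_k·‖G̃(x_k)‖ with G̃(x_k) = x_k − prox_h(x_k − g_k), H_k ⪰ c_k·I symmetric, φ_k(x) = f(x_k) + ⟨g_k, x − x_k⟩ + ½⟨x − x_k, H_k(x − x_k)⟩ + h(x), and x_{k+1} satisfies the inexactness condition with some ξ_k ∈ ∂φ_k(x_{k+1}), ‖ξ_k‖ ≤ (η_k/2)‖x_{k+1} − x_k‖. Then φ(x_k) ≥ φ(x_{k+1}) + ½(c_k − L_g − η_k − 2δ_k(1 + η_k/2 + ‖H_k‖))·‖x_k − x_{k+1}‖², where φ = f + h. -/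
open scoped RealInnerProductSpace

/-- Auxiliary: if `a ≤ t*C + b` for all small positive `t`, then `a ≤ b`. -/
lemma stmt2_limit_aux (a b C : ℝ) (hC : 0 ≤ C)
    (H : ∀ t : ℝ, 0 < t → t ≤ 1 → a ≤ t * C + b) : a ≤ b := by
  by_contra hab
  push_neg at hab
  set t : ℝ := min 1 ((a - b) / (2 * C + 1)) with ht
  have htpos : 0 < t := lt_min one_pos (div_pos (by linarith) (by linarith))
  have h1 := H t htpos (min_le_left _ _)
  have h2 : t ≤ (a - b) / (2 * C + 1) := min_le_right _ _
  have h3 : t * C ≤ (a - b) / (2 * C + 1) * C := mul_le_mul_of_nonneg_right h2 hC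
  have h4 : (a - b) / (2 * C + 1) * (2 * C + 1) = a - b := by field_simp
  nlinarith [h3, h4]

/-- Auxiliary: descent lemma for functions with Lipschitz gradient. -/
lemma stmt2_descent_aux {n : ℕ}
    (f : EuclideanSpace ℝ (Fin n) → ℝ)
    (f' : EuclideanSpace ℝ (Fin n) → EuclideanSpace ℝ (Fin n))
    (hdiff : ∀ y, HasGradientAt f (f' y) y)
    (Lg : ℝ) (hLg : 0 < Lg)
    (hLip : ∀ a b, ‖f' a - f' b‖ ≤ Lg * ‖a - b‖)
    (a b : EuclideanSpace ℝ (Fin n)) :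
    f b ≤ f a + ⟪f' a, b - a⟫ + Lg / 2 * ‖b - a‖ ^ 2 := by
  set d := b - a with hd
  have line : ∀ t : ℝ, HasDerivAt (fun s : ℝ => a + s • d) d t := by
    intro t
    simpa using ((hasDerivAt_id t).smul_const d).const_add a
  have gderiv : ∀ t : ℝ, HasDerivAt (fun s : ℝ => f (a + s • d))
      ⟪f' (a + t • d), d⟫ t := by
    intro t
    have := (hdiff (a + t • d)).hasFDerivAt.comp_hasDerivAt t (line t)
    simp only [InnerProductSpace.toDual_apply_apply] at this
    exact this
  set φ : ℝ → ℝ := fun t => f (a + t • d) - f a - t * ⟪f' a, d⟫ - Lg / 2 * t ^ 2 * ‖d‖ ^ 2 with hφ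
  have φderiv : ∀ t : ℝ, HasDerivAt φ
      (⟪f' (a + t • d), d⟫ - ⟪f' a, d⟫ - Lg * t * ‖d‖ ^ 2) t := by
    intro t
    have h1 : HasDerivAt (fun t : ℝ => t * ⟪f' a, d⟫) ⟪f' a, d⟫ t := by
      simpa using (hasDerivAt_id t).mul_const ⟪f' a, d⟫
    have h2 : HasDerivAt (fun t : ℝ => Lg / 2 * t ^ 2 * ‖d‖ ^ 2) (Lg * t * ‖d‖ ^ 2) t := by
      have := ((hasDerivAt_pow 2 t).const_mul (Lg / 2)).mul_const (‖d‖ ^ 2)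
      refine this.congr_deriv ?_
      ring
    exact (((gderiv t).sub_const (f a)).sub h1).sub h2
  have hanti : AntitoneOn φ (Set.Icc (0:ℝ) 1) := by
    apply antitoneOn_of_deriv_nonpos (convex_Icc 0 1)
    · exact fun t _ => ((φderiv t).continuousAt).continuousWithinAt
    · exact fun t _ => ((φderiv t).differentiableAt).differentiableWithinAt
    · intro t ht
      rw [interior_Icc] at ht
      rw [(φderiv t).deriv]
      have h1 : ⟪f' (a + t • d) - f' a, d⟫ ≤ ‖f' (a + t • d) - f' a‖ * ‖d‖ :=
        real_inner_le_norm _ _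
      have h2 : ‖f' (a + t • d) - f' a‖ ≤ Lg * (t * ‖d‖) := by
        have := hLip (a + t • d) a
        simpa [norm_smul, abs_of_pos ht.1, mul_assoc] using this
      have h3 : ⟪f' (a + t • d) - f' a, d⟫ = ⟪f' (a + t • d), d⟫ - ⟪f' a, d⟫ :=
        inner_sub_left _ _ _
      nlinarith [norm_nonneg d, ht.1.le, hLg.le]
  have := hanti (Set.left_mem_Icc.mpr zero_le_one) (Set.right_mem_Icc.mpr zero_le_one) zero_le_one
  simp only [hφ] at this
  simp only [zero_smul, add_zero, one_smul] at this
  have hab : a + d = b := by rw [hd]; abel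
  rw [hab] at this
  nlinarith [this]


/-- Auxiliary: the inexactness subgradient condition for `φk` yields a subgradient of `h`. -/
lemma stmt2_subgrad_aux {n : ℕ}
    (h : EuclideanSpace ℝ (Fin n) → ℝ) (hconv : ConvexOn ℝ Set.univ h)
    (gk xk x1 ξk : EuclideanSpace ℝ (Fin n))
    (ck : ℝ) (hck : 0 < ck)
    (Hk : EuclideanSpace ℝ (Fin n) →L[ℝ] EuclideanSpace ℝ (Fin n))
    (hsym : ∀ u v, ⟪Hk u, v⟫ = ⟪u, Hk v⟫)
    (hpd : ∀ v, ck * ‖v‖ ^ 2 ≤ ⟪v, Hk v⟫)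
    (f : EuclideanSpace ℝ (Fin n) → ℝ)
    (φk : EuclideanSpace ℝ (Fin n) → ℝ)
    (hφk : ∀ z, φk z =
      f xk + ⟪gk, z - xk⟫ + (1 / 2) * ⟪z - xk, Hk (z - xk)⟫ + h z)
    (hξ : ∀ z, φk x1 + ⟪ξk, z - x1⟫ ≤ φk z) :
    ∀ z, h x1 + ⟪ξk - gk - Hk (x1 - xk), z - x1⟫ ≤ h z := by
  set s := x1 - xk with hs
  intro z
  set w := z - x1 with hw
  have hCnn : 0 ≤ (1 / 2) * ⟪w, Hk w⟫ := by
    have := hpd w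
    nlinarith [norm_nonneg w, sq_nonneg ‖w‖]
  rw [show h x1 + ⟪ξk - gk - Hk s, w⟫ ≤ h z ↔
      ⟪ξk - gk - Hk s, w⟫ ≤ h z - h x1 by constructor <;> intro <;> linarith]
  apply stmt2_limit_aux _ _ ((1 / 2) * ⟪w, Hk w⟫) hCnn
  intro t ht0 ht1
  have hzt := hξ (x1 + t • w)
  rw [hφk (x1 + t • w), hφk x1] at hzt
  have e1 : (x1 + t • w) - xk = s + t • w := by rw [hs]; abel
  have e2 : (x1 + t • w) - x1 = t • w := by abel
  rw [e1, e2, ← hs] at hzt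
  have hcv : h (x1 + t • w) ≤ (1 - t) * h x1 + t * h z := by
    have hmem := hconv.2 (Set.mem_univ x1) (Set.mem_univ z)
      (by linarith : (0:ℝ) ≤ 1 - t) ht0.le (by ring)
    have e3 : (1 - t) • x1 + t • z = x1 + t • w := by
      rw [hw]; module
    rw [e3] at hmem
    simpa using hmem
  have e4 : ⟪gk, s + t • w⟫ = ⟪gk, s⟫ + t * ⟪gk, w⟫ := by
    rw [inner_add_right, real_inner_smul_right]
  have e5 : ⟪s + t • w, Hk (s + t • w)⟫
      = ⟪s, Hk s⟫ + 2 * t * ⟪Hk s, w⟫ + t ^ 2 * ⟪w, Hk w⟫ := by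
    rw [map_add, map_smul, inner_add_left, inner_add_right, inner_add_right,
      real_inner_smul_left, real_inner_smul_right, real_inner_smul_left,
      real_inner_smul_right]
    have c1 : ⟪s, Hk w⟫ = ⟪Hk s, w⟫ := (hsym s w).symm
    have c2 : ⟪w, Hk s⟫ = ⟪Hk s, w⟫ := real_inner_comm _ _
    rw [c1, c2]; ring
  have e6 : ⟪ξk, t • w⟫ = t * ⟪ξk, w⟫ := real_inner_smul_right _ _ _
  rw [e4, e5, e6] at hzt
  have e7 : ⟪ξk - gk - Hk s, w⟫ = ⟪ξk, w⟫ - ⟪gk, w⟫ - ⟪Hk s, w⟫ := by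
    rw [inner_sub_left, inner_sub_left]
  rw [e7]
  have hq : t * (⟪ξk, w⟫ - ⟪gk, w⟫ - ⟪Hk s, w⟫)
      ≤ t * (t * ((1 / 2) * ⟪w, Hk w⟫) + (h z - h x1)) := by nlinarith [hzt, hcv]
  exact le_of_mul_le_mul_left hq ht0

/-- Auxiliary: bound on the norm from monotonicity via completing the square. -/
lemma stmt2_sq_aux {n : ℕ} (G c s : EuclideanSpace ℝ (Fin n))
    (hmono : ⟪G + c, G + s⟫ ≤ (0:ℝ)) : ‖G‖ ≤ ‖c‖ + ‖s‖ := by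
  have hsq : ⟪G + (2⁻¹:ℝ) • (c + s), G + (2⁻¹:ℝ) • (c + s)⟫
      - ⟪(2⁻¹:ℝ) • (c - s), (2⁻¹:ℝ) • (c - s)⟫ = ⟪G + c, G + s⟫ := by
    simp only [inner_add_left, inner_add_right, inner_sub_left, inner_sub_right,
      real_inner_smul_left, real_inner_smul_right]
    linarith [real_inner_comm c G, real_inner_comm s G, real_inner_comm s c]
  set m := G + (2⁻¹:ℝ) • (c + s) with hm
  set q := (2⁻¹:ℝ) • (c - s) with hq
  have h1 : ‖m‖ ^ 2 ≤ ‖q‖ ^ 2 := by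
    have e1 : ⟪m, m⟫ = ‖m‖ ^ 2 := real_inner_self_eq_norm_sq m
    have e2 : ⟪q, q⟫ = ‖q‖ ^ 2 := real_inner_self_eq_norm_sq q
    linarith [hsq, hmono, e1.symm.le, e2.le]
  have h2 : ‖m‖ ≤ ‖q‖ := by nlinarith [norm_nonneg m, norm_nonneg q]
  have h3 : ‖q‖ ≤ 2⁻¹ * (‖c‖ + ‖s‖) := by
    rw [hq, norm_smul]
    have := norm_sub_le c s
    simp only [norm_inv, Real.norm_ofNat]
    nlinarith
  have h4 : ‖(2⁻¹:ℝ) • (c + s)‖ ≤ 2⁻¹ * (‖c‖ + ‖s‖) := by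
    rw [norm_smul]
    have := norm_add_le c s
    simp only [norm_inv, Real.norm_ofNat]
    nlinarith
  have h5 : ‖G‖ ≤ ‖m‖ + ‖(2⁻¹:ℝ) • (c + s)‖ := by
    have : G = m - (2⁻¹:ℝ) • (c + s) := by rw [hm]; abel
    rw [this]
    exact norm_sub_le _ _
  linarith

/-- sufficient decrease of the OEF proximal Newton step:
`φ(xₖ) ≥ φ(x_{k+1}) + ½(cₖ − L_g − ηₖ − 2δₖ(1 + ηₖ/2 + ‖Hₖ‖))‖xₖ − x_{k+1}‖²`
for `φ = f + h`. -/
theorem stmt2 {n : ℕ}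
    (f : EuclideanSpace ℝ (Fin n) → ℝ)
    (f' : EuclideanSpace ℝ (Fin n) → EuclideanSpace ℝ (Fin n))
    (hdiff : ∀ y, HasGradientAt f (f' y) y)
    (Lg : ℝ) (hLg : 0 < Lg)
    (hLip : ∀ a b, ‖f' a - f' b‖ ≤ Lg * ‖a - b‖)
    (h : EuclideanSpace ℝ (Fin n) → ℝ) (hconv : ConvexOn ℝ Set.univ h)
    (prox : EuclideanSpace ℝ (Fin n) → EuclideanSpace ℝ (Fin n))
    (hprox : ∀ u p, p = prox u ↔ ∀ z, h p + ⟪u - p, z - p⟫ ≤ h z)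
    (gk xk x1 ξk : EuclideanSpace ℝ (Fin n))
    (δk ηk ck : ℝ) (hδ0 : 0 ≤ δk) (hδ1 : δk < 1 / 2)
    (hη0 : 0 ≤ ηk) (hη1 : ηk < 1) (hck : 0 < ck)
    (Hk : EuclideanSpace ℝ (Fin n) →L[ℝ] EuclideanSpace ℝ (Fin n))
    (hsym : ∀ u v, ⟪Hk u, v⟫ = ⟪u, Hk v⟫)
    (hpd : ∀ v, ck * ‖v‖ ^ 2 ≤ ⟪v, Hk v⟫)
    -- inexact gradient: ‖gₖ − ∇f(xₖ)‖ ≤ δₖ ‖G̃(xₖ)‖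
    (hg : ‖gk - f' xk‖ ≤ δk * ‖xk - prox (xk - gk)‖)
    (φk : EuclideanSpace ℝ (Fin n) → ℝ)
    (hφk : ∀ z, φk z =
      f xk + ⟪gk, z - xk⟫ + (1 / 2) * ⟪z - xk, Hk (z - xk)⟫ + h z)
    (hξ : ∀ z, φk x1 + ⟪ξk, z - x1⟫ ≤ φk z)
    (hξn : ‖ξk‖ ≤ ηk / 2 * ‖x1 - xk‖) :
    f xk + h xk ≥ f x1 + h x1 +
      (1 / 2) * (ck - Lg - ηk - 2 * δk * (1 + ηk / 2 + ‖Hk‖)) * ‖xk - x1‖ ^ 2 := by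
  set s := x1 - xk with hs
  set p := prox (xk - gk) with hpdef
  set G := xk - p with hG
  set c := Hk s - ξk with hc
  -- prox inequality
  have hp : ∀ z, h p + ⟪(xk - gk) - p, z - p⟫ ≤ h z := (hprox (xk - gk) p).mp rfl
  -- subgradient of h at x1
  have hv : ∀ z, h x1 + ⟪ξk - gk - Hk s, z - x1⟫ ≤ h z := by
    rw [hs]
    exact stmt2_subgrad_aux h hconv gk xk x1 ξk ck hck Hk hsym hpd f φk hφk hξ
  -- monotonicity of the subdifferential of h
  have hmono : ⟪G + c, G + s⟫ ≤ (0:ℝ) := by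
    have h1 := hp x1
    have h2 := hv p
    have e1 : ⟪ξk - gk - Hk s, p - x1⟫ = - ⟪ξk - gk - Hk s, x1 - p⟫ := by
      rw [show p - x1 = -(x1 - p) by abel, inner_neg_right]
    have e2 : ⟪(xk - gk) - p, x1 - p⟫ - ⟪ξk - gk - Hk s, x1 - p⟫
        = ⟪G + c, G + s⟫ := by
      rw [← inner_sub_left]
      congr 1
      · rw [hG, hc]; abel
      · rw [hG, hs]; abel
    rw [e1] at h2
    linarith [h1, h2, e2.symm.le, e2.le]
  have hGle : ‖G‖ ≤ ‖c‖ + ‖s‖ := stmt2_sq_aux G c s hmono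
  have hcle : ‖c‖ ≤ ‖Hk‖ * ‖s‖ + ηk / 2 * ‖s‖ := by
    have h1 : ‖c‖ ≤ ‖Hk s‖ + ‖ξk‖ := norm_sub_le _ _
    have h2 : ‖Hk s‖ ≤ ‖Hk‖ * ‖s‖ := Hk.le_opNorm s
    have h3 : ‖ξk‖ ≤ ηk / 2 * ‖s‖ := hξn
    linarith
  -- main estimates
  have E1 := hξ xk
  rw [hφk xk, hφk x1] at E1
  rw [← hs, sub_self] at E1
  simp only [inner_zero_right, map_zero, add_zero, mul_zero] at E1
  -- E1 : f xk + ⟪gk, s⟫ + ½⟪s, Hk s⟫ + h x1 + ⟪ξk, xk - x1⟫ ≤ f xk + h xk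
  have E2 := stmt2_descent_aux f f' hdiff Lg hLg hLip xk x1
  rw [← hs] at E2
  have E3 := hpd s
  have E4 : ⟪ξk, xk - x1⟫ ≥ -(ηk / 2 * ‖s‖ ^ 2) := by
    have h1 : |⟪ξk, xk - x1⟫| ≤ ‖ξk‖ * ‖xk - x1‖ := abs_real_inner_le_norm _ _
    have h2 : ‖xk - x1‖ = ‖s‖ := by rw [hs, norm_sub_rev]
    have h3 : ‖ξk‖ ≤ ηk / 2 * ‖s‖ := hξn
    rw [h2] at h1
    have h4 := abs_le.mp h1
    have h5 : ‖ξk‖ * ‖s‖ ≤ ηk / 2 * ‖s‖ * ‖s‖ := mul_le_mul_of_nonneg_right h3 (norm_nonneg s)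
    have h6 : ‖s‖ * ‖s‖ = ‖s‖ ^ 2 := (sq ‖s‖).symm
    have h7 : ηk / 2 * ‖s‖ * ‖s‖ = ηk / 2 * ‖s‖ ^ 2 := by rw [mul_assoc, h6]
    linarith [h4.1, h4.2]
  have E5 : ⟪gk, s⟫ - ⟪f' xk, s⟫ ≥ -(δk * (1 + ηk / 2 + ‖Hk‖) * ‖s‖ ^ 2) := by
    have h1 : |⟪gk - f' xk, s⟫| ≤ ‖gk - f' xk‖ * ‖s‖ := abs_real_inner_le_norm _ _
    have h2 : ⟪gk - f' xk, s⟫ = ⟪gk, s⟫ - ⟪f' xk, s⟫ := inner_sub_left _ _ _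
    have h3 : ‖gk - f' xk‖ ≤ δk * ‖G‖ := hg
    have h4 : ‖G‖ ≤ (1 + ηk / 2 + ‖Hk‖) * ‖s‖ := by
      have hss : (1 + ηk / 2 + ‖Hk‖) * ‖s‖ = ‖s‖ + (‖Hk‖ * ‖s‖ + ηk / 2 * ‖s‖) := by ring
      rw [hss]; linarith [hGle, hcle]
    have h5 := abs_le.mp h1
    have h6 : ‖gk - f' xk‖ * ‖s‖ ≤ δk * ((1 + ηk / 2 + ‖Hk‖) * ‖s‖) * ‖s‖ := by
      apply mul_le_mul_of_nonneg_right _ (norm_nonneg s)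
      calc ‖gk - f' xk‖ ≤ δk * ‖G‖ := h3
        _ ≤ δk * ((1 + ηk / 2 + ‖Hk‖) * ‖s‖) := mul_le_mul_of_nonneg_left h4 hδ0
    have hss : δk * ((1 + ηk / 2 + ‖Hk‖) * ‖s‖) * ‖s‖ = δk * (1 + ηk / 2 + ‖Hk‖) * ‖s‖ ^ 2 := by ring
    linarith [h5.1, h2.symm.le, h2.le, hss.le, hss.symm.le, h6]
  have hnorm : ‖xk - x1‖ ^ 2 = ‖s‖ ^ 2 := by rw [hs, norm_sub_rev]
  rw [hnorm]
  linarith [E1, E2, E3, E4, E5]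
end

section
/- Let x̄_k be the exact minimizer of the strongly convex function φ_k(x) = ⟨g_k, x − x_k⟩ + ½⟨x − x_k, H_k(x − x_k)⟩ + h(x) where H_k ⪰ c_k·I with c_k > 0, and let x_{k+1} be an inexact minimizer in the sense that r_k(x_{k+1}) := x_{k+1} − prox_h(x_{k+1} − (g_k + H_k(x_{k+1} − x_k))) satisfies ‖r_k(x_{k+1})‖ ≤ (η_k/2)‖x_k − x_{k+1}‖. Then ‖x_{k+1} − x̄_k‖ ≤ (η_k/(2 c_k))·(1 + ‖H_k‖)·‖x_k − x_{k+1}‖. -/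
open scoped RealInnerProductSpace

/-- distance from the inexact minimizer `x_{k+1}` of
`φₖ(x) = ⟨gₖ, x − xₖ⟩ + ½⟨x − xₖ, Hₖ(x − xₖ)⟩ + h(x)` to the exact minimizer `x̄ₖ`:
`‖x_{k+1} − x̄ₖ‖ ≤ (ηₖ/(2cₖ))(1 + ‖Hₖ‖)‖xₖ − x_{k+1}‖`. -/
theorem stmt3 {n : ℕ}
    (h : EuclideanSpace ℝ (Fin n) → ℝ) (hconv : ConvexOn ℝ Set.univ h)
    (prox : EuclideanSpace ℝ (Fin n) → EuclideanSpace ℝ (Fin n))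
    (hprox : ∀ u p, p = prox u ↔ ∀ z, h p + ⟪u - p, z - p⟫ ≤ h z)
    (gk xk x1 xbar : EuclideanSpace ℝ (Fin n))
    (ck ηk : ℝ) (hck : 0 < ck) (hηk : 0 ≤ ηk)
    (Hk : EuclideanSpace ℝ (Fin n) →L[ℝ] EuclideanSpace ℝ (Fin n))
    (hsym : ∀ u v, ⟪Hk u, v⟫ = ⟪u, Hk v⟫)
    (hpd : ∀ v, ck * ‖v‖ ^ 2 ≤ ⟪v, Hk v⟫)
    (φk : EuclideanSpace ℝ (Fin n) → ℝ)
    (hφk : ∀ z, φk z = ⟪gk, z - xk⟫ + (1 / 2) * ⟪z - xk, Hk (z - xk)⟫ + h z)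
    -- x̄ₖ is the exact minimizer of φₖ
    (hxbar : ∀ z, φk xbar ≤ φk z)
    -- x_{k+1} is an inexact minimizer: the residual map is small
    (rk : EuclideanSpace ℝ (Fin n))
    (hrk : rk = x1 - prox (x1 - (gk + Hk (x1 - xk))))
    (hrn : ‖rk‖ ≤ ηk / 2 * ‖xk - x1‖) :
    ‖x1 - xbar‖ ≤ ηk / (2 * ck) * (1 + ‖Hk‖) * ‖xk - x1‖ := by
  set u : EuclideanSpace ℝ (Fin n) := x1 - (gk + Hk (x1 - xk)) with hu
  set p : EuclideanSpace ℝ (Fin n) := prox u with hpdef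
  have hp : ∀ z, h p + ⟪u - p, z - p⟫ ≤ h z := (hprox u p).mp hpdef
  have hpe : p = x1 - rk := by rw [hrk]; abel
  set a : EuclideanSpace ℝ (Fin n) := xbar - xk with ha
  set ξ : EuclideanSpace ℝ (Fin n) := -(gk + Hk a) with hξdef
  -- ξ is a subgradient of h at xbar
  have hξ : ∀ z, h xbar + ⟪ξ, z - xbar⟫ ≤ h z := by
    intro z
    set b : EuclideanSpace ℝ (Fin n) := z - xbar with hb
    set Q : ℝ := ⟪b, Hk b⟫ with hQdef
    have hQ : 0 ≤ Q := le_trans (by positivity) (hpd b)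
    have hξb : ⟪ξ, b⟫ = -⟪gk, b⟫ - ⟪Hk a, b⟫ := by
      rw [hξdef, inner_neg_left, inner_add_left]; ring
    -- suffices to show it up to any ε > 0
    by_contra hcon
    push_neg at hcon
    set ε : ℝ := (h xbar + ⟪ξ, b⟫ - h z) / 2 with hε
    have hε0 : 0 < ε := by simp only [hε]; linarith
    set t : ℝ := min 1 (2 * ε / (Q + 1)) with ht
    have ht0 : 0 < t := lt_min one_pos (by positivity)
    have ht1 : t ≤ 1 := min_le_left _ _
    have htQ : t / 2 * Q ≤ ε := by
      have h1 : t ≤ 2 * ε / (Q + 1) := min_le_right _ _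
      have h2 : t * Q ≤ (2 * ε / (Q + 1)) * Q :=
        mul_le_mul_of_nonneg_right h1 hQ
      have h3 : (2 * ε / (Q + 1)) * Q ≤ 2 * ε := by
        rw [div_mul_eq_mul_div, div_le_iff₀ (by linarith)]
        nlinarith
      linarith
    set zt : EuclideanSpace ℝ (Fin n) := xbar + t • b with hzt
    have hz1 : zt - xk = a + t • b := by rw [hzt, ha]; abel
    have hab : ⟪a, Hk b⟫ = ⟪Hk a, b⟫ := (hsym a b).symm
    have hba : ⟪b, Hk a⟫ = ⟪Hk a, b⟫ := real_inner_comm (Hk a) b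
    have e1 : φk zt = ⟪gk, a⟫ + t * ⟪gk, b⟫
        + (1 / 2) * (⟪a, Hk a⟫ + 2 * t * ⟪Hk a, b⟫ + t ^ 2 * Q) + h zt := by
      rw [hφk, hz1, hQdef]
      simp only [inner_add_left, inner_add_right, map_add, map_smul,
        real_inner_smul_left, real_inner_smul_right]
      rw [hab, hba]; ring
    have e0 : φk xbar = ⟪gk, a⟫ + (1 / 2) * ⟪a, Hk a⟫ + h xbar := by
      rw [hφk]
    have key : φk xbar ≤ φk zt := hxbar zt
    have hcv : h zt ≤ (1 - t) * h xbar + t * h z := by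
      have hz2 : zt = (1 - t) • xbar + t • z := by
        rw [hzt, hb]; module
      rw [hz2]
      exact hconv.2 (Set.mem_univ xbar) (Set.mem_univ z)
        (by linarith) (le_of_lt ht0) (by ring)
    rw [e0, e1] at key
    -- 0 ≤ t * (⟪gk,b⟫ + ⟪Hk a,b⟫ + h z - h xbar) + t^2/2 * Q
    have h5 : 0 ≤ t * (⟪gk, b⟫ + ⟪Hk a, b⟫ + h z - h xbar + t / 2 * Q) := by
      have hx : t * (⟪gk, b⟫ + ⟪Hk a, b⟫ + h z - h xbar + t / 2 * Q)
          = t * ⟪gk, b⟫ + t * ⟪Hk a, b⟫ + (1 / 2) * (t ^ 2 * Q)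
            + (t * h z - t * h xbar) := by ring
      rw [hx]
      linarith [key, hcv]
    have h6 : 0 ≤ ⟪gk, b⟫ + ⟪Hk a, b⟫ + h z - h xbar + t / 2 * Q :=
      nonneg_of_mul_nonneg_right h5 ht0
    -- contradiction with hcon : h z < h xbar + ⟪ξ, b⟫ = h xbar - ⟪gk,b⟫ - ⟪Hk a,b⟫
    rw [hξb] at hε
    simp only [hε] at htQ
    linarith [hcon, htQ, h6]
  -- combine the two subgradient inequalities (monotonicity)
  obtain ⟨d, hd⟩ : ∃ d : EuclideanSpace ℝ (Fin n), d = x1 - xbar := ⟨_, rfl⟩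
  rw [show x1 - xbar = d from hd.symm]
  have hA : h p + ⟪u - p, xbar - p⟫ ≤ h xbar := hp xbar
  have hB : h xbar + ⟪ξ, p - xbar⟫ ≤ h p := hξ p
  have hsum : ⟪u - p, xbar - p⟫ + ⟪ξ, p - xbar⟫ = ⟪(u - p) - ξ, xbar - p⟫ := by
    simp only [inner_sub_left, show p - xbar = -(xbar - p) from by abel,
      inner_neg_right]
    ring
  have hlin : (u - p) - ξ = rk - Hk d := by
    rw [hu, hpe, hξdef, ha, hd]
    simp only [map_sub]
    abel
  have hvec : xbar - p = rk - d := by rw [hpe, hd]; abel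
  have hmono : ⟪rk - Hk d, rk - d⟫ ≤ 0 := by
    rw [← hlin, ← hvec, ← hsum]; linarith
  have hexp : ⟪rk - Hk d, rk - d⟫
      = ‖rk‖ ^ 2 - ⟪rk, d⟫ - ⟪Hk d, rk⟫ + ⟪Hk d, d⟫ := by
    rw [inner_sub_left, inner_sub_right, inner_sub_right,
      real_inner_self_eq_norm_sq]
    ring
  rw [hexp] at hmono
  -- Cauchy-Schwarz and eigenvalue bounds
  have hB1 : ck * ‖d‖ ^ 2 ≤ ⟪Hk d, d⟫ :=
    (hpd d).trans_eq (real_inner_comm (Hk d) d)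
  have hC : ⟪rk, d⟫ ≤ ‖rk‖ * ‖d‖ := real_inner_le_norm rk d
  have hD : ⟪Hk d, rk⟫ ≤ ‖Hk d‖ * ‖rk‖ := real_inner_le_norm _ _
  have hE : ‖Hk d‖ ≤ ‖Hk‖ * ‖d‖ := Hk.le_opNorm d
  have hmain : ck * ‖d‖ ^ 2 ≤ (1 + ‖Hk‖) * ‖rk‖ * ‖d‖ := by
    linarith [hB1, hC, hD, hmono,
      mul_le_mul_of_nonneg_right hE (norm_nonneg rk), sq_nonneg ‖rk‖]
  -- conclude
  have hHn : (0:ℝ) ≤ 1 + ‖Hk‖ := by linarith [norm_nonneg Hk]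
  rcases eq_or_lt_of_le (norm_nonneg d) with hd0 | hd0
  · rw [← hd0]
    exact mul_nonneg (mul_nonneg (div_nonneg hηk (by linarith)) hHn)
      (norm_nonneg _)
  · have h7 : ck * ‖d‖ ≤ (1 + ‖Hk‖) * ‖rk‖ := by
      have h' : ck * ‖d‖ * ‖d‖ ≤ (1 + ‖Hk‖) * ‖rk‖ * ‖d‖ := by
        have he : ck * ‖d‖ * ‖d‖ = ck * ‖d‖ ^ 2 := by ring
        rw [he]; exact hmain
      exact le_of_mul_le_mul_right h' hd0
    have h8 : (1 + ‖Hk‖) * ‖rk‖ ≤ (1 + ‖Hk‖) * (ηk / 2 * ‖xk - x1‖) :=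
      mul_le_mul_of_nonneg_left hrn hHn
    rw [div_mul_eq_mul_div, div_mul_eq_mul_div,
      le_div_iff₀ (by linarith : (0:ℝ) < 2 * ck)]
    linarith [h7, h8]
end

section
/- Negative-curvature descent: suppose f satisfies the cubic upper bound f(x + s) ≤ f(x) + ∇f(x)ᵀs + ½sᵀ∇²f(x)s + (L_h/6)‖s‖³ along the segment, ‖g − ∇f(x)‖ ≤ ε_g/3, p̂ is a unit vector with p̂ᵀ∇²f(x)p̂ ≤ −(17/18)ε_h where ε_h = √(L_h ε_g), d = −sign(gᵀp̂)·p̂, and α = (17/(12 L_h))·ε_h. Then f(x + α d) ≤ f(x) − (17/(10368 √L_h))·ε_g^{3/2}. -/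
open scoped RealInnerProductSpace

private lemma stmt10_aux (Lh εg εh α : ℝ) (hLh : 0 < Lh)
    (hεh2 : εh ^ 2 = Lh * εg) (hα : α = 17 / (12 * Lh) * εh) :
    α * (εg / 3) + 1 / 2 * (α ^ 2 * (-(17 / 18) * εh)) + Lh / 6 * α ^ 3
      = -(17 / 10368) * (εh * εg / Lh) := by
  rw [hα]
  field_simp
  ring_nf
  linear_combination (- 323606016 * εh) * hεh2

/-- negative-curvature descent. Under the cubic upper bound for `f`
with Hessian `A = ∇²f(x)` and gradient `gx = ∇f(x)`, if `‖g − gx‖ ≤ ε_g/3`,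
`p̂` is a unit vector with `p̂ᵀ A p̂ ≤ −(17/18)ε_h` where `ε_h = √(L_h ε_g)`,
`d = −sign(gᵀp̂)·p̂` and `α = (17/(12 L_h))ε_h`, then
`f(x + α d) ≤ f(x) − (17/(10368 √L_h))·ε_g^{3/2}`. -/
theorem stmt10 {n : ℕ}
    (f : EuclideanSpace ℝ (Fin n) → ℝ)
    (gx g x p d : EuclideanSpace ℝ (Fin n))
    (A : EuclideanSpace ℝ (Fin n) →L[ℝ] EuclideanSpace ℝ (Fin n))
    (hAsym : ∀ u v, ⟪A u, v⟫ = ⟪u, A v⟫)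
    (Lh εg εh α s : ℝ) (hLh : 0 < Lh) (hεg : 0 < εg)
    (hεh : εh = Real.sqrt (Lh * εg))
    -- cubic upper bound along the step
    (hcubic : ∀ u : EuclideanSpace ℝ (Fin n),
      f (x + u) ≤ f x + ⟪gx, u⟫ + (1 / 2) * ⟪u, A u⟫ + Lh / 6 * ‖u‖ ^ 3)
    (hg : ‖g - gx‖ ≤ εg / 3)
    (hp : ‖p‖ = 1)
    (hcurv : ⟪p, A p⟫ ≤ -(17 / 18) * εh)
    -- s = sign(gᵀp̂)
    (hs : (s = 1 ∨ s = -1) ∧ s * ⟪g, p⟫ = |⟪g, p⟫|)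
    (hd : d = -s • p)
    (hα : α = 17 / (12 * Lh) * εh) :
    f (x + α • d) ≤ f x - 17 / (10368 * Real.sqrt Lh) * εg ^ ((3 : ℝ) / 2) := by
  have hs2 : s * s = 1 := by rcases hs.1 with h | h <;> rw [h] <;> norm_num
  have habs : |(-s : ℝ)| = 1 := by rcases hs.1 with h | h <;> rw [h] <;> norm_num
  have hεh2 : εh ^ 2 = Lh * εg := by
    rw [hεh, Real.sq_sqrt (by positivity)]
  have hεhpos : 0 < εh := by
    rw [hεh]; exact Real.sqrt_pos.mpr (by positivity)
  have hαpos : 0 < α := by rw [hα]; positivity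
  have hnd : ‖d‖ = 1 := by
    rw [hd, norm_smul, Real.norm_eq_abs, habs, hp, mul_one]
  have hnu : ‖α • d‖ = α := by
    rw [norm_smul, Real.norm_eq_abs, abs_of_pos hαpos, hnd, mul_one]
  -- gradient term bound
  have h1 : ⟪gx, α • d⟫ ≤ α * (εg / 3) := by
    have e1 : ⟪gx, α • d⟫ = α * (-(s * ⟪gx, p⟫)) := by
      rw [hd, real_inner_smul_right, real_inner_smul_right]; ring
    have e2 : ⟪gx, p⟫ = ⟪g, p⟫ - ⟪g - gx, p⟫ := by
      rw [inner_sub_left]; ring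
    have hinner : |⟪g - gx, p⟫| ≤ εg / 3 := by
      calc |⟪g - gx, p⟫| ≤ ‖g - gx‖ * ‖p‖ := abs_real_inner_le_norm _ _
        _ = ‖g - gx‖ := by rw [hp, mul_one]
        _ ≤ εg / 3 := hg
    have hbd : -(s * ⟪gx, p⟫) ≤ εg / 3 := by
      have e3 : -(s * ⟪gx, p⟫) = -|⟪g, p⟫| + s * ⟪g - gx, p⟫ := by
        rw [e2]; nlinarith [hs.2]
      rw [e3]
      have h4 : s * ⟪g - gx, p⟫ ≤ |⟪g - gx, p⟫| := by
        rcases hs.1 with h | h <;> rw [h] <;>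
          simp [neg_le_abs, le_abs_self]
      nlinarith [abs_nonneg ⟪g, p⟫]
    rw [e1]
    exact mul_le_mul_of_nonneg_left hbd hαpos.le
  -- curvature term
  have h2 : ⟪α • d, A (α • d)⟫ = α ^ 2 * ⟪p, A p⟫ := by
    rw [hd, map_smul, real_inner_smul_left, real_inner_smul_right,
      map_smul, real_inner_smul_left, real_inner_smul_right]
    linear_combination α ^ 2 * ⟪p, A p⟫ * hs2
  have hmain := hcubic (α • d)
  rw [hnu] at hmain
  have h3 : (1 : ℝ) / 2 * ⟪α • d, A (α • d)⟫ ≤ 1 / 2 * (α ^ 2 * (-(17 / 18) * εh)) := by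
    rw [h2]
    nlinarith [sq_nonneg α]
  -- key: εh * εg = √Lh * εg^{3/2}
  have hsqrtLh : (0 : ℝ) < Real.sqrt Lh := Real.sqrt_pos.mpr hLh
  have hLs : Real.sqrt Lh * Real.sqrt Lh = Lh := Real.mul_self_sqrt hLh.le
  have key : εh * εg = Real.sqrt Lh * εg ^ ((3 : ℝ) / 2) := by
    rw [hεh, Real.sqrt_mul hLh.le]
    have h5 : εg ^ ((3 : ℝ) / 2) = εg * Real.sqrt εg := by
      rw [show ((3 : ℝ) / 2) = 1 + 1 / 2 by norm_num, Real.rpow_add hεg,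
        Real.rpow_one, ← Real.sqrt_eq_rpow]
    rw [h5]; ring
  have hrhs : 17 / (10368 * Real.sqrt Lh) * εg ^ ((3 : ℝ) / 2)
      = 17 / 10368 * (εh * εg / Lh) := by
    have h6 : εh * εg / Lh = εg ^ ((3 : ℝ) / 2) / Real.sqrt Lh := by
      rw [key, div_eq_div_iff hLh.ne' hsqrtLh.ne']
      linear_combination εg ^ ((3 : ℝ) / 2) * hLs
    rw [h6]; ring
  have heq := stmt10_aux Lh εg εh α hLh hεh2 hα
  calc f (x + α • d) ≤ f x + ⟪gx, α • d⟫ + 1 / 2 * ⟪α • d, A (α • d)⟫ + Lh / 6 * α ^ 3 := hmain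
    _ ≤ f x + (α * (εg / 3) + 1 / 2 * (α ^ 2 * (-(17 / 18) * εh)) + Lh / 6 * α ^ 3) := by
        linarith [h1, h3]
    _ = f x - 17 / (10368 * Real.sqrt Lh) * εg ^ ((3 : ℝ) / 2) := by
        rw [heq, hrhs]; ring
end

section
/- Let Q be symmetric with Q + 2ε_h·I ⪰ (ε_h/2)·I, let d satisfy the CG property rᵀd = 0 where r = (Q + 2ε_h I)d + g. Then for every α ∈ [0, 1]: α·gᵀd + (α²/2)·dᵀQd ≤ −(α/4)·ε_h·‖d‖². -/
open scoped RealInnerProductSpace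

/-- if `Q + 2ε_h I ⪰ (ε_h/2)I` and the CG iterate `d` satisfies
`rᵀd = 0` for `r = (Q + 2ε_h I)d + g`, then for every `α ∈ [0,1]`,
`α gᵀd + (α²/2) dᵀQd ≤ −(α/4)ε_h‖d‖²`. -/
theorem stmt11 {n : ℕ}
    (Q : EuclideanSpace ℝ (Fin n) →L[ℝ] EuclideanSpace ℝ (Fin n))
    (hQsym : ∀ u v, ⟪Q u, v⟫ = ⟪u, Q v⟫)
    (εh : ℝ) (hεh : 0 < εh)
    (hpd : ∀ v : EuclideanSpace ℝ (Fin n),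
      εh / 2 * ‖v‖ ^ 2 ≤ ⟪v, Q v + (2 * εh) • v⟫)
    (g d r : EuclideanSpace ℝ (Fin n))
    (hr : r = Q d + (2 * εh) • d + g)
    (horth : ⟪r, d⟫ = 0) :
    ∀ α : ℝ, α ∈ Set.Icc (0 : ℝ) 1 →
      α * ⟪g, d⟫ + α ^ 2 / 2 * ⟪d, Q d⟫ ≤ -(α / 4) * εh * ‖d‖ ^ 2 := by
  intro α hα
  obtain ⟨h0, h1⟩ := hα
  have hN : (0:ℝ) ≤ ‖d‖^2 := by positivity
  have hpd' := hpd d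
  rw [inner_add_right, real_inner_smul_right, real_inner_self_eq_norm_sq] at hpd'
  have hg : ⟪g, d⟫ = -⟪d, Q d⟫ - 2*εh*‖d‖^2 := by
    have h := horth
    rw [hr, inner_add_left, inner_add_left, real_inner_smul_left,
      real_inner_self_eq_norm_sq, hQsym] at h
    linarith
  rw [hg]
  nlinarith [mul_nonneg (by nlinarith : (0:ℝ) ≤ α - α^2/2)
      (by nlinarith : (0:ℝ) ≤ ⟪d, Q d⟫ + 3/2*εh*‖d‖^2),
    mul_nonneg h0 (mul_nonneg hεh.le hN)]
end

section
/- Approximate-Newton-step descent: suppose f satisfies the cubic upper bound f(x+s) ≤ f(x) + ∇f(x)ᵀs + ½sᵀ∇²f(x)s + (L_h/6)‖s‖³, ‖g − ∇f(x)‖ ≤ ε_g/3, ‖Q − ∇²f(x)‖ ≤ ε_h/18, and d satisfies α·gᵀd + (α²/2)·dᵀQd ≤ −(α/4)·ε_h·‖d‖² for all α ∈ [0,1], with ‖d‖ > 2ε_g/ε_h and ε_h = √(L_h ε_g). Then for α = √(2ε_g/(3(L_h+η)))/‖d‖ with η > 0, one has α ∈ (0,1) and f(x + α d) ≤ f(x)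 − (√2·η/(9√3·(L_h + η)^{3/2}))·ε_g^{3/2}. -/
open scoped RealInnerProductSpace

set_option maxHeartbeats 1000000 in
/-- approximate-Newton-step descent. Under the cubic upper bound,
approximate gradient/Hessian accuracy, the CG decrease property, and
`‖d‖ > 2ε_g/ε_h` with `ε_h = √(L_h ε_g)`, the step size
`α = √(2ε_g/(3(L_h+η)))/‖d‖` satisfies `α ∈ (0,1)` and
`f(x + α d) ≤ f(x) − (√2 η/(9√3 (L_h+η)^{3/2})) ε_g^{3/2}`. -/
theorem stmt12 {n : ℕ}
    (f : EuclideanSpace ℝ (Fin n) → ℝ)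
    (gx g x d : EuclideanSpace ℝ (Fin n))
    (A Q : EuclideanSpace ℝ (Fin n) →L[ℝ] EuclideanSpace ℝ (Fin n))
    (hAsym : ∀ u v, ⟪A u, v⟫ = ⟪u, A v⟫)
    (hQsym : ∀ u v, ⟪Q u, v⟫ = ⟪u, Q v⟫)
    (Lh εg εh η α : ℝ) (hLh : 0 < Lh) (hεg0 : 0 < εg) (hεg1 : εg < Lh)
    (hεh : εh = Real.sqrt (Lh * εg)) (hη : 0 < η)
    (hcubic : ∀ u : EuclideanSpace ℝ (Fin n),
      f (x + u) ≤ f x + ⟪gx, u⟫ + (1 / 2) * ⟪u, A u⟫ + Lh / 6 * ‖u‖ ^ 3)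
    (hg : ‖g - gx‖ ≤ εg / 3)
    (hQA : ‖Q - A‖ ≤ εh / 18)
    (hdec : ∀ β : ℝ, β ∈ Set.Icc (0 : ℝ) 1 →
      β * ⟪g, d⟫ + β ^ 2 / 2 * ⟪d, Q d⟫ ≤ -(β / 4) * εh * ‖d‖ ^ 2)
    (hdlarge : ‖d‖ > 2 * εg / εh)
    (hα : α = Real.sqrt (2 * εg / (3 * (Lh + η))) / ‖d‖) :
    (0 < α ∧ α < 1) ∧
      f (x + α • d) ≤ f x -
        Real.sqrt 2 * η / (9 * Real.sqrt 3 * (Lh + η) ^ ((3 : ℝ) / 2)) *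
          εg ^ ((3 : ℝ) / 2) := by
  have hLhη : 0 < Lh + η := by linarith
  have hεh0 : 0 < εh := by rw [hεh]; positivity
  have hεh2 : εh ^ 2 = Lh * εg := by rw [hεh]; exact Real.sq_sqrt (by positivity)
  have hD : 0 < ‖d‖ := lt_trans (by positivity) hdlarge
  set t := Real.sqrt (2 * εg / (3 * (Lh + η))) with ht
  have ht0 : 0 < t := Real.sqrt_pos.mpr (by positivity)
  have ht2 : t ^ 2 = 2 * εg / (3 * (Lh + η)) := Real.sq_sqrt (by positivity)
  have hα0 : 0 < α := by rw [hα]; positivity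
  have htlt : t < 2 * εg / εh := by
    have h1 : t ^ 2 < (2 * εg / εh) ^ 2 := by
      rw [ht2, div_pow, hεh2, div_lt_div_iff₀ (by positivity) (by positivity)]
      nlinarith [mul_pos hεg0 hεg0]
    nlinarith [ht0, (show (0:ℝ) < 2 * εg / εh by positivity)]
  have hα1 : α < 1 := by
    rw [hα, div_lt_one hD]; linarith
  have hαd : α * ‖d‖ = t := by rw [hα]; field_simp
  have hεgd : 2 * εg ≤ εh * ‖d‖ := by
    rw [gt_iff_lt, div_lt_iff₀ hεh0] at hdlarge; linarith
  -- inner product rewrites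
  have e1 : ⟪gx, α • d⟫ = α * ⟪gx, d⟫ := real_inner_smul_right _ _ _
  have e2 : ⟪α • d, A (α • d)⟫ = α ^ 2 * ⟪d, A d⟫ := by
    rw [map_smul, real_inner_smul_left, real_inner_smul_right]; ring
  have e3 : ‖α • d‖ = t := by
    rw [norm_smul, Real.norm_eq_abs, abs_of_pos hα0, hαd]
  have step1 : f (x + α • d) ≤ f x + α * ⟪gx, d⟫ + (1/2) * (α ^ 2 * ⟪d, A d⟫)
      + Lh / 6 * t ^ 3 := by
    have h := hcubic (α • d); rw [e1, e2, e3] at h; exact h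
  -- gradient error bound
  have hgx : ⟪gx, d⟫ ≤ ⟪g, d⟫ + εg / 3 * ‖d‖ := by
    have hsub : ⟪g - gx, d⟫ = ⟪g, d⟫ - ⟪gx, d⟫ := inner_sub_left g gx d
    have habs : |⟪g - gx, d⟫| ≤ εg / 3 * ‖d‖ :=
      (abs_real_inner_le_norm _ _).trans (mul_le_mul_of_nonneg_right hg (norm_nonneg d))
    have h := (abs_le.mp habs).1
    linarith
  -- Hessian error bound
  have hAd : ⟪d, A d⟫ ≤ ⟪d, Q d⟫ + εh / 18 * ‖d‖ ^ 2 := by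
    have hsub : ⟪d, (Q - A) d⟫ = ⟪d, Q d⟫ - ⟪d, A d⟫ := by
      rw [ContinuousLinearMap.sub_apply, inner_sub_right]
    have habs : |⟪d, (Q - A) d⟫| ≤ εh / 18 * ‖d‖ ^ 2 := by
      calc |⟪d, (Q - A) d⟫| ≤ ‖d‖ * ‖(Q - A) d‖ := abs_real_inner_le_norm _ _
        _ ≤ ‖d‖ * (‖Q - A‖ * ‖d‖) := by
            gcongr; exact (Q - A).le_opNorm d
        _ ≤ εh / 18 * ‖d‖ ^ 2 := by nlinarith [norm_nonneg d, norm_nonneg (Q - A)]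
    have h := (abs_le.mp habs).1
    linarith
  have step2 : α * ⟪gx, d⟫ ≤ α * ⟪g, d⟫ + α * (εg / 3) * ‖d‖ := by
    calc α * ⟪gx, d⟫ ≤ α * (⟪g, d⟫ + εg / 3 * ‖d‖) :=
          mul_le_mul_of_nonneg_left hgx hα0.le
      _ = α * ⟪g, d⟫ + α * (εg / 3) * ‖d‖ := by ring
  have step3 : (1/2) * (α ^ 2 * ⟪d, A d⟫) ≤ α ^ 2 / 2 * ⟪d, Q d⟫
      + α ^ 2 * (εh / 36) * ‖d‖ ^ 2 := by
    calc (1/2) * (α ^ 2 * ⟪d, A d⟫) = α ^ 2 / 2 * ⟪d, A d⟫ := by ring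
      _ ≤ α ^ 2 / 2 * (⟪d, Q d⟫ + εh / 18 * ‖d‖ ^ 2) :=
          mul_le_mul_of_nonneg_left hAd (by positivity)
      _ = α ^ 2 / 2 * ⟪d, Q d⟫ + α ^ 2 * (εh / 36) * ‖d‖ ^ 2 := by ring
  have step4 := hdec α ⟨hα0.le, hα1.le⟩
  have step5 : f (x + α • d) ≤ f x - α / 4 * εh * ‖d‖ ^ 2 + α * (εg / 3) * ‖d‖
      + α ^ 2 * (εh / 36) * ‖d‖ ^ 2 + Lh / 6 * t ^ 3 := by
    linarith [step1, step2, step3, step4]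
  have step6 : α * (εg / 3) * ‖d‖ ≤ α / 6 * εh * ‖d‖ ^ 2 := by
    calc α * (εg / 3) * ‖d‖ = (α * ‖d‖ / 6) * (2 * εg) := by ring
      _ ≤ (α * ‖d‖ / 6) * (εh * ‖d‖) := mul_le_mul_of_nonneg_left hεgd (by positivity)
      _ = α / 6 * εh * ‖d‖ ^ 2 := by ring
  have step7 : α ^ 2 * (εh / 36) * ‖d‖ ^ 2 ≤ α * (εh / 36) * ‖d‖ ^ 2 := by
    have h : α ^ 2 ≤ α := by
      have h2 := mul_le_mul_of_nonneg_right hα1.le hα0.le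
      calc α ^ 2 = α * α := sq α
        _ ≤ 1 * α := h2
        _ = α := one_mul α
    calc α ^ 2 * (εh / 36) * ‖d‖ ^ 2 = (εh / 36 * ‖d‖ ^ 2) * α ^ 2 := by ring
      _ ≤ (εh / 36 * ‖d‖ ^ 2) * α := mul_le_mul_of_nonneg_left h (by positivity)
      _ = α * (εh / 36) * ‖d‖ ^ 2 := by ring
  have step8 : f (x + α • d) ≤ f x - α / 18 * εh * ‖d‖ ^ 2 + Lh / 6 * t ^ 3 := by
    linarith
  have h9 : α / 18 * εh * ‖d‖ ^ 2 = εh * ‖d‖ * t / 18 := by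
    rw [← hαd]; ring
  have h10 : εg * t / 9 ≤ εh * ‖d‖ * t / 18 := by
    have := mul_le_mul_of_nonneg_right hεgd ht0.le
    linarith
  have h11 : Lh / 6 * t ^ 3 = Lh * εg * t / (9 * (Lh + η)) := by
    have h : t ^ 3 = t ^ 2 * t := by ring
    rw [h, ht2]; field_simp; ring
  have step12 : f (x + α • d) ≤ f x - η * εg * t / (9 * (Lh + η)) := by
    have hfin : - εg * t / 9 + Lh * εg * t / (9 * (Lh + η))
        = - (η * εg * t / (9 * (Lh + η))) := by
      field_simp; ring
    linarith [step8, h9.le, h10, h11.le, hfin]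
  refine ⟨⟨hα0, hα1⟩, ?_⟩
  -- now rewrite the target constant
  have hr1 : (Lh + η) ^ ((3:ℝ)/2) = (Lh + η) * Real.sqrt (Lh + η) := by
    rw [show (3:ℝ)/2 = 1 + 1/2 by norm_num, Real.rpow_add hLhη, Real.rpow_one,
      ← Real.sqrt_eq_rpow]
  have hr2 : εg ^ ((3:ℝ)/2) = εg * Real.sqrt εg := by
    rw [show (3:ℝ)/2 = 1 + 1/2 by norm_num, Real.rpow_add hεg0, Real.rpow_one,
      ← Real.sqrt_eq_rpow]
  have ht_eq : t = Real.sqrt 2 * Real.sqrt εg / (Real.sqrt 3 * Real.sqrt (Lh + η)) := by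
    rw [ht, Real.sqrt_div (by positivity), Real.sqrt_mul (by norm_num : (0:ℝ) ≤ 2),
      Real.sqrt_mul (by norm_num : (0:ℝ) ≤ 3)]
  rw [hr1, hr2]
  have hconst : Real.sqrt 2 * η / (9 * Real.sqrt 3 * ((Lh + η) * Real.sqrt (Lh + η)))
      * (εg * Real.sqrt εg) = η * εg * t / (9 * (Lh + η)) := by
    rw [ht_eq]
    have h3 : Real.sqrt 3 ≠ 0 := by positivity
    have hs : Real.sqrt (Lh + η) ≠ 0 := by positivity
    have hne : Lh + η ≠ 0 := ne_of_gt hLhη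
    field_simp
  rw [hconst]
  exact step12
end

section
/- Termination certificate (gradient part): suppose ∇²f is L_h-Lipschitz (so ‖∇f(x+d) − ∇f(x) − ∇²f(x)d‖ ≤ (L_h/2)‖d‖²), ‖g − ∇f(x)‖ ≤ ε_g/3, ‖Q − ∇²f(x)‖ ≤ ε_h/18, ‖(Q + 2ε_h I)d + g‖ ≤ μ̂·ε_h·‖d‖, and ‖d‖ ≤ 2ε_g/ε_h with ε_h = √(L_h ε_g). Then ‖∇f(x + d)‖ ≤ (58/9 + 2μ̂)·ε_g. -/
open scoped RealInnerProductSpace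

/-- termination certificate, gradient part. If
`‖∇f(x+d) − ∇f(x) − ∇²f(x)d‖ ≤ (L_h/2)‖d‖²`, `‖g − ∇f(x)‖ ≤ ε_g/3`,
`‖Q − ∇²f(x)‖ ≤ ε_h/18`, `‖(Q + 2ε_h I)d + g‖ ≤ μ̂ ε_h ‖d‖`, and
`‖d‖ ≤ 2ε_g/ε_h` with `ε_h = √(L_h ε_g)`, then
`‖∇f(x + d)‖ ≤ (58/9 + 2μ̂)ε_g`. -/
theorem stmt13 {n : ℕ}
    (gradf : EuclideanSpace ℝ (Fin n) → EuclideanSpace ℝ (Fin n))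
    (A Q : EuclideanSpace ℝ (Fin n) →L[ℝ] EuclideanSpace ℝ (Fin n))
    (hAsym : ∀ u v, ⟪A u, v⟫ = ⟪u, A v⟫)
    (hQsym : ∀ u v, ⟪Q u, v⟫ = ⟪u, Q v⟫)
    (x d g : EuclideanSpace ℝ (Fin n))
    (Lh εg εh μ : ℝ) (hLh : 0 < Lh) (hεg : 0 < εg) (hμ : 0 < μ)
    (hεh : εh = Real.sqrt (Lh * εg))
    (htaylor : ‖gradf (x + d) - gradf x - A d‖ ≤ Lh / 2 * ‖d‖ ^ 2)
    (hg : ‖g - gradf x‖ ≤ εg / 3)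
    (hQA : ‖Q - A‖ ≤ εh / 18)
    (hres : ‖Q d + (2 * εh) • d + g‖ ≤ μ * εh * ‖d‖)
    (hdsmall : ‖d‖ ≤ 2 * εg / εh) :
    ‖gradf (x + d)‖ ≤ (58 / 9 + 2 * μ) * εg := by

  have hεhpos : 0 < εh := hεh ▸ Real.sqrt_pos.mpr (mul_pos hLh hεg)
  have hεh2 : εh ^ 2 = Lh * εg := by
    rw [hεh, Real.sq_sqrt (le_of_lt (mul_pos hLh hεg))]
  have hd0 : 0 ≤ ‖d‖ := norm_nonneg d
  have key : gradf (x + d) =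
      (gradf (x + d) - gradf x - A d) + (A - Q) d +
        (Q d + (2 * εh) • d + g) + (-(2 * εh)) • d + -(g - gradf x) := by
    simp only [ContinuousLinearMap.sub_apply]
    module
  have h1 : ‖gradf (x + d) - gradf x - A d‖ ≤ 2 * εg := by
    refine htaylor.trans ?_
    have : ‖d‖ ^ 2 ≤ (2 * εg / εh) ^ 2 := by
      exact pow_le_pow_left₀ hd0 hdsmall 2
    have h2 : Lh / 2 * ‖d‖ ^ 2 ≤ Lh / 2 * ((2 * εg / εh) ^ 2) := by
      exact mul_le_mul_of_nonneg_left this (by linarith)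
    refine h2.trans (le_of_eq ?_)
    field_simp
    nlinarith [hεh2]
  have h2 : ‖(A - Q) d‖ ≤ εg / 9 := by
    have := (A - Q).le_opNorm d
    have hAQ : ‖A - Q‖ ≤ εh / 18 := by rwa [norm_sub_rev]
    have : ‖(A - Q) d‖ ≤ (εh / 18) * (2 * εg / εh) := by
      calc ‖(A - Q) d‖ ≤ ‖A - Q‖ * ‖d‖ := this
      _ ≤ (εh / 18) * (2 * εg / εh) :=
        mul_le_mul hAQ hdsmall hd0 (by linarith)
    refine this.trans (le_of_eq ?_)
    field_simp; ring
  have h3 : ‖Q d + (2 * εh) • d + g‖ ≤ 2 * μ * εg := by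
    refine hres.trans ?_
    have : μ * εh * ‖d‖ ≤ μ * εh * (2 * εg / εh) :=
      mul_le_mul_of_nonneg_left hdsmall (by positivity)
    refine this.trans (le_of_eq ?_)
    field_simp
  have h4 : ‖(-(2 * εh)) • d‖ ≤ 4 * εg := by
    rw [norm_smul]
    have : ‖(-(2 * εh) : ℝ)‖ = 2 * εh := by
      rw [norm_neg, Real.norm_of_nonneg (by linarith)]
    rw [this]
    have : 2 * εh * ‖d‖ ≤ 2 * εh * (2 * εg / εh) :=
      mul_le_mul_of_nonneg_left hdsmall (by linarith)
    refine this.trans (le_of_eq ?_)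
    field_simp; ring
  have h5 : ‖-(g - gradf x)‖ ≤ εg / 3 := by rwa [norm_neg]
  calc ‖gradf (x + d)‖
      = ‖(gradf (x + d) - gradf x - A d) + (A - Q) d +
        (Q d + (2 * εh) • d + g) + (-(2 * εh)) • d + -(g - gradf x)‖ := by rw [← key]
    _ ≤ ‖(gradf (x + d) - gradf x - A d) + (A - Q) d +
        (Q d + (2 * εh) • d + g) + (-(2 * εh)) • d‖ + ‖-(g - gradf x)‖ := norm_add_le _ _
    _ ≤ ‖(gradf (x + d) - gradf x - A d) + (A - Q) d +
        (Q d + (2 * εh) • d + g)‖ + ‖(-(2 * εh)) • d‖ + ‖-(g - gradf x)‖ := by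
        gcongr; exact norm_add_le _ _
    _ ≤ ‖(gradf (x + d) - gradf x - A d) + (A - Q) d‖ +
        ‖Q d + (2 * εh) • d + g‖ + ‖(-(2 * εh)) • d‖ + ‖-(g - gradf x)‖ := by
        gcongr; exact norm_add_le _ _
    _ ≤ ‖gradf (x + d) - gradf x - A d‖ + ‖(A - Q) d‖ +
        ‖Q d + (2 * εh) • d + g‖ + ‖(-(2 * εh)) • d‖ + ‖-(g - gradf x)‖ := by
        gcongr; exact norm_add_le _ _
    _ ≤ 2 * εg + εg / 9 + 2 * μ * εg + 4 * εg + εg / 3 := by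
        gcongr
    _ = (58 / 9 + 2 * μ) * εg := by ring
end

section
/- Termination certificate (Hessian part): suppose ‖∇²f(x+d) − ∇²f(x)‖ ≤ L_h‖d‖, ‖Q − ∇²f(x)‖ ≤ ε_h/18, λ̂ = p̂ᵀQp̂ ≥ −ε_h for a unit vector p̂ with λ̂ − λ_min(Q) ≤ ε_h/2, and ‖d‖ ≤ 2ε_g/ε_h with ε_h = √(L_h ε_g). Then λ_min(∇²f(x + d)) ≥ −(32/9)·√(L_h ε_g). -/
open scoped RealInnerProductSpace

lemma quad_lb {n : ℕ} (B : EuclideanSpace ℝ (Fin n) →L[ℝ] EuclideanSpace ℝ (Fin n))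
    (v : EuclideanSpace ℝ (Fin n)) : -(‖B‖ * ‖v‖ ^ 2) ≤ ⟪v, B v⟫ := by
  have h1 := abs_real_inner_le_norm v (B v)
  have h2 := B.le_opNorm v
  have h3 : (0:ℝ) ≤ ‖v‖ := norm_nonneg v
  have := neg_abs_le (⟪v, B v⟫)
  nlinarith [mul_le_mul_of_nonneg_left h2 h3]

/-- termination certificate, Hessian part. If
`‖∇²f(x+d) − ∇²f(x)‖ ≤ L_h‖d‖`, `‖Q − ∇²f(x)‖ ≤ ε_h/18`,
`λ̂ = p̂ᵀQp̂ ≥ −ε_h` for a unit vector `p̂` with `λ̂ − λ_min(Q) ≤ ε_h/2`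
(encoded as the quadratic-form bound `⟪v, Q v⟫ ≥ (λ̂ − ε_h/2)‖v‖²`), and
`‖d‖ ≤ 2ε_g/ε_h` with `ε_h = √(L_h ε_g)`, then
`λ_min(∇²f(x+d)) ≥ −(32/9)√(L_h ε_g)` (as a quadratic-form bound). -/
theorem stmt14 {n : ℕ}
    (A A' Q : EuclideanSpace ℝ (Fin n) →L[ℝ] EuclideanSpace ℝ (Fin n))
    (hAsym : ∀ u v, ⟪A u, v⟫ = ⟪u, A v⟫)
    (hA'sym : ∀ u v, ⟪A' u, v⟫ = ⟪u, A' v⟫)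
    (hQsym : ∀ u v, ⟪Q u, v⟫ = ⟪u, Q v⟫)
    (d p : EuclideanSpace ℝ (Fin n)) (hp : ‖p‖ = 1)
    (Lh εg εh lamhat : ℝ) (hLh : 0 < Lh) (hεg : 0 < εg)
    (hεh : εh = Real.sqrt (Lh * εg))
    -- Hessian Lipschitz bound between x and x + d
    (hHessLip : ‖A' - A‖ ≤ Lh * ‖d‖)
    (hQA : ‖Q - A‖ ≤ εh / 18)
    (hlam : lamhat = ⟪p, Q p⟫) (hlamlb : lamhat ≥ -εh)
    -- λ̂ − λ_min(Q) ≤ ε_h/2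
    (hacc : ∀ v : EuclideanSpace ℝ (Fin n),
      (lamhat - εh / 2) * ‖v‖ ^ 2 ≤ ⟪v, Q v⟫)
    (hdsmall : ‖d‖ ≤ 2 * εg / εh) :
    ∀ v : EuclideanSpace ℝ (Fin n),
      -(32 / 9) * Real.sqrt (Lh * εg) * ‖v‖ ^ 2 ≤ ⟪v, A' v⟫ := by
  intro v
  have hεhpos : 0 < εh := by
    rw [hεh]; exact Real.sqrt_pos.mpr (mul_pos hLh hεg)
  have hεhsq : εh ^ 2 = Lh * εg := by
    rw [hεh, Real.sq_sqrt (mul_pos hLh hεg).le]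
  have hsplit : ⟪v, A' v⟫ = ⟪v, Q v⟫ + ⟪v, (A - Q) v⟫ + ⟪v, (A' - A) v⟫ := by
    simp [ContinuousLinearMap.sub_apply, inner_sub_right]
  have h1 := hacc v
  have h2 := quad_lb (A - Q) v
  have h3 := quad_lb (A' - A) v
  have hAQ : ‖A - Q‖ ≤ εh / 18 := by rwa [norm_sub_rev]
  have hLd : Lh * ‖d‖ ≤ 2 * εh := by
    have : Lh * (2 * εg / εh) = 2 * εh := by
      field_simp; nlinarith
    nlinarith [mul_le_mul_of_nonneg_left hdsmall hLh.le]
  have hA'A : ‖A' - A‖ ≤ 2 * εh := le_trans hHessLip hLd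
  have hv : (0:ℝ) ≤ ‖v‖ ^ 2 := sq_nonneg _
  have hnAQ : (0:ℝ) ≤ ‖A - Q‖ := norm_nonneg _
  have hnA'A : (0:ℝ) ≤ ‖A' - A‖ := norm_nonneg _
  rw [hsplit, ← hεh]
  nlinarith [mul_le_mul_of_nonneg_right hAQ hv, mul_le_mul_of_nonneg_right hA'A hv]
end
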